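/- Let D : [a,b] → ℝ be continuous with D(t) ≥ e for all t, and suppose D(s) ≤ D(r) + C ∫ᵣˢ D(t') log D(t') dt' for all a ≤ r ≤ s ≤ b. Then D(b) ≤ D(a)^{exp(C(b-a))}. -/

import Mathlib

open Set MeasureTheory intervalIntegral

theorem stmt5 (a b C : ℝ) (hab : a < b) (hC : 0 < C) (D : ℝ → ℝ)
    (hcont : ContinuousOn D (Set.Icc a b))
    (hD : ∀ t ∈ Set.Icc a b, Real.exp 1 ≤ D t)
    (hineq : ∀ r ∈ Set.Icc a b, ∀ s ∈ Set.Icc a b, r ≤ s →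
      D s ≤ D r + C * ∫ t in r..s, D t * Real.log (D t)) :
    D b ≤ D a ^ Real.exp (C * (b - a)) := by
  have he1 : (1:ℝ) < Real.exp 1 := by
    have := Real.exp_one_gt_d9; linarith
  set g : ℝ → ℝ := fun t => D t * Real.log (D t) with hgdef
  have hDpos : ∀ t ∈ Set.Icc a b, 0 < D t := fun t ht =>
    lt_of_lt_of_le (lt_trans one_pos he1) (hD t ht)
  have hgcont : ContinuousOn g (Set.Icc a b) :=
    hcont.mul (hcont.log fun t ht => ne_of_gt (hDpos t ht))
  set F : ℝ → ℝ := fun s => D a + C * ∫ t in a..s, g t with hFdef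
  have hint : ∀ s ∈ Set.Icc a b, IntervalIntegrable g volume a s := by
    intro s hs
    apply ContinuousOn.intervalIntegrable
    apply hgcont.mono
    rw [Set.uIcc_of_le hs.1]
    exact Set.Icc_subset_Icc le_rfl hs.2
  -- D ≤ F on Icc
  have hDF : ∀ s ∈ Set.Icc a b, D s ≤ F s := by
    intro s hs
    exact hineq a (Set.left_mem_Icc.2 hab.le) s hs hs.1
  have hFe : ∀ s ∈ Set.Icc a b, Real.exp 1 ≤ F s := fun s hs =>
    le_trans (hD s hs) (hDF s hs)
  have hFpos : ∀ s ∈ Set.Icc a b, 0 < F s := fun s hs =>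
    lt_of_lt_of_le (lt_trans one_pos he1) (hFe s hs)
  have hlogF : ∀ s ∈ Set.Icc a b, 1 ≤ Real.log (F s) := by
    intro s hs
    have := Real.log_le_log (Real.exp_pos 1) (hFe s hs)
    rwa [Real.log_exp] at this
  have hlogFpos : ∀ s ∈ Set.Icc a b, 0 < Real.log (F s) := fun s hs =>
    lt_of_lt_of_le one_pos (hlogF s hs)
  -- continuity of F
  have hFcont : ContinuousOn F (Set.Icc a b) := by
    apply continuousOn_const.add (continuousOn_const.mul ?_)
    have h := intervalIntegral.continuousOn_primitive_interval
      (f := g) (μ := volume) (a := a) (b := b) ?_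
    · rwa [Set.uIcc_of_le hab.le] at h
    · rw [Set.uIcc_of_le hab.le]
      exact hgcont.integrableOn_Icc
  -- derivative of F on interior
  have hFderiv : ∀ s ∈ Set.Ioo a b, HasDerivAt F (C * g s) s := by
    intro s hs
    have h1 : HasDerivAt (fun u => ∫ t in a..u, g t) (g s) s := by
      apply intervalIntegral.integral_hasDerivAt_right
      · exact hint s (Set.Ioo_subset_Icc_self hs)
      · exact (hgcont.mono Set.Ioo_subset_Icc_self).stronglyMeasurableAtFilter
          isOpen_Ioo s hs
      · exact hgcont.continuousAt (Icc_mem_nhds hs.1 hs.2)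
    exact (h1.const_mul C).const_add (D a)
  set G : ℝ → ℝ := fun s => Real.log (Real.log (F s)) - C * s with hGdef
  have hGderiv : ∀ s ∈ Set.Ioo a b, HasDerivAt G (C * g s / F s / Real.log (F s) - C) s := by
    intro s hs
    have hsI := Set.Ioo_subset_Icc_self hs
    have h1 := (hFderiv s hs).log (ne_of_gt (hFpos s hsI))
    have h2 := h1.log (ne_of_gt (hlogFpos s hsI))
    have h3 : HasDerivAt (fun x : ℝ => C * x) C s := by
      simpa using (hasDerivAt_id s).const_mul C
    exact h2.sub h3
  have hGderiv_nonpos : ∀ s ∈ Set.Ioo a b, C * g s / F s / Real.log (F s) - C ≤ 0 := by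
    intro s hs
    have hsI := Set.Ioo_subset_Icc_self hs
    have hgle : g s ≤ F s * Real.log (F s) := by
      have hDs := hD s hsI
      have h1 : D s ≤ F s := hDF s hsI
      have hlogD : Real.log (D s) ≤ Real.log (F s) :=
        Real.log_le_log (hDpos s hsI) h1
      have hlogDnn : 0 ≤ Real.log (D s) := by
        have := Real.log_le_log (Real.exp_pos 1) hDs
        rw [Real.log_exp] at this; linarith
      exact mul_le_mul h1 hlogD hlogDnn (hFpos s hsI).le
    rw [sub_nonpos, div_div]
    rw [div_le_iff₀ (mul_pos (hFpos s hsI) (hlogFpos s hsI))]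
    calc C * g s ≤ C * (F s * Real.log (F s)) := by
          exact mul_le_mul_of_nonneg_left hgle hC.le
      _ = C * (F s * Real.log (F s)) := rfl
    -- done via nlinarith fallback
  have hGcont : ContinuousOn G (Set.Icc a b) := by
    apply ContinuousOn.sub ?_ (continuousOn_const.mul continuousOn_id)
    exact (hFcont.log fun s hs => ne_of_gt (hFpos s hs)).log
      fun s hs => ne_of_gt (hlogFpos s hs)
  have hGanti : AntitoneOn G (Set.Icc a b) := by
    apply antitoneOn_of_deriv_nonpos (convex_Icc a b) hGcont
    · intro x hx
      rw [interior_Icc] at hx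
      exact (hGderiv x hx).differentiableAt.differentiableWithinAt
    · intro x hx
      rw [interior_Icc] at hx
      rw [(hGderiv x hx).deriv]
      exact hGderiv_nonpos x hx
  have hGba : G b ≤ G a :=
    hGanti (Set.left_mem_Icc.2 hab.le) (Set.right_mem_Icc.2 hab.le) hab.le
  have hFa : F a = D a := by simp [hFdef]
  have haI : a ∈ Set.Icc a b := Set.left_mem_Icc.2 hab.le
  have hbI : b ∈ Set.Icc a b := Set.right_mem_Icc.2 hab.le
  -- from hGba: log (log (F b)) ≤ log (log (D a)) + C * (b - a)
  have key : Real.log (Real.log (F b)) ≤ Real.log (Real.log (D a)) + C * (b - a) := by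
    have := hGba
    rw [hGdef] at this
    simp only [hFa] at this
    linarith
  have hlogDa : 0 < Real.log (D a) := by
    have := hlogFpos a haI; rwa [hFa] at this
  have step1 : Real.log (F b) ≤ Real.log (D a) * Real.exp (C * (b - a)) := by
    have h := Real.exp_le_exp.2 key
    rw [Real.exp_log (hlogFpos b hbI), Real.exp_add, Real.exp_log hlogDa] at h
    exact h
  have step2 : F b ≤ Real.exp (Real.log (D a) * Real.exp (C * (b - a))) := by
    have h := Real.exp_le_exp.2 step1
    rwa [Real.exp_log (hFpos b hbI)] at h
  have : D b ≤ Real.exp (Real.log (D a) * Real.exp (C * (b - a))) :=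
    le_trans (hDF b hbI) step2
  rwa [← Real.rpow_def_of_pos (hDpos a haI)] at this
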